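/- arXiv:1510.07068 — 3 statements merged into one kernel-verified Lean document; each statement's English description precedes it below -/
import Mathlib

section
/- Let F be a field and let A, B be 2×2 matrices over F with trace(A) = trace(B) and det(A) = det(B) (equivalently, with the same characteristic polynomial), and suppose the discriminant trace(A)² − 4·det(A) of this common characteristic polynomial is nonzero. Then A and B are conjugate: there exists an invertible 2×2 matrix P over F with B = P · A · P⁻¹. -/
open Matrix

lemma aux_companion (F : Type*) [Field F] (A : Matrix (Fin 2) (Fin 2) F)
    (hdisc : A.trace ^ 2 - 4 * A.det ≠ 0) :
    ∃ P : Matrix (Fin 2) (Fin 2) F, IsUnit P.det ∧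
      A * P = P * !![0, -A.det; 1, A.trace] := by
  by_cases h10 : A 1 0 ≠ 0
  · refine ⟨!![1, A 0 0; 0, A 1 0], ?_, ?_⟩
    · simp [Matrix.det_fin_two, h10]
    · ext i j
      fin_cases i <;> fin_cases j <;>
        simp [Matrix.mul_apply, Fin.sum_univ_two, Matrix.trace_fin_two,
          Matrix.det_fin_two] <;> ring
  · push_neg at h10
    by_cases h01 : A 0 1 ≠ 0
    · refine ⟨!![0, A 0 1; 1, A 1 1], ?_, ?_⟩
      · simp [Matrix.det_fin_two, h01]
      · ext i j
        fin_cases i <;> fin_cases j <;>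
          simp [Matrix.mul_apply, Fin.sum_univ_two, Matrix.trace_fin_two,
            Matrix.det_fin_two, h10] <;> ring
    · push_neg at h01
      have hne : A 1 1 - A 0 0 ≠ 0 := by
        intro h
        apply hdisc
        rw [Matrix.trace_fin_two, Matrix.det_fin_two, h01]
        have : A 1 1 = A 0 0 := by linear_combination h
        rw [this]; ring
      refine ⟨!![1, A 0 0; 1, A 1 1], ?_, ?_⟩
      · simp only [Matrix.det_fin_two_of, isUnit_iff_ne_zero, one_mul, mul_one]
        intro h; exact hne (by linear_combination h)
      · ext i j
        fin_cases i <;> fin_cases j <;>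
          simp [Matrix.mul_apply, Fin.sum_univ_two, Matrix.trace_fin_two,
            Matrix.det_fin_two, h01, h10] <;> ring

theorem statement1 (F : Type*) [Field F]
    (A B : Matrix (Fin 2) (Fin 2) F)
    (htr : A.trace = B.trace) (hdet : A.det = B.det)
    (hdisc : A.trace ^ 2 - 4 * A.det ≠ 0) :
    ∃ P : Matrix (Fin 2) (Fin 2) F, IsUnit P.det ∧ B = P * A * P⁻¹ := by
  obtain ⟨Pa, hPa, hA⟩ := aux_companion F A hdisc
  obtain ⟨Pb, hPb, hB⟩ := aux_companion F B (by rw [← htr, ← hdet]; exact hdisc)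
  rw [← htr, ← hdet] at hB
  refine ⟨Pb * Pa⁻¹, ?_, ?_⟩
  · rw [Matrix.det_mul]
    exact hPb.mul (Matrix.isUnit_nonsing_inv_det Pa hPa)
  · have hBinv : B = Pb * !![0, -A.det; 1, A.trace] * Pb⁻¹ := by
      rw [← hB, Matrix.mul_assoc, Matrix.mul_nonsing_inv Pb hPb, Matrix.mul_one]
    rw [Matrix.mul_inv_rev, Matrix.nonsing_inv_nonsing_inv Pa hPa]
    calc B = Pb * !![0, -A.det; 1, A.trace] * Pb⁻¹ := hBinv
      _ = Pb * (Pa⁻¹ * (A * Pa)) * Pb⁻¹ := by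
          rw [hA, ← Matrix.mul_assoc Pa⁻¹ Pa _, Matrix.nonsing_inv_mul Pa hPa,
            Matrix.one_mul]
      _ = Pb * Pa⁻¹ * A * (Pa * Pb⁻¹) := by noncomm_ring
end

section
/- Let p be a prime and let A be a 2×2 matrix with entries in ℤ_p such that det(A) ≠ 0 and trace(A) is a unit of ℤ_p. Then there exist 2×2 matrices K₁, K₂ with entries in ℤ_p and unit determinants such that A = K₁ · diag(det A, 1) · K₂. -/
open Matrix

theorem statement9 (p : ℕ) [Fact p.Prime]
    (A : Matrix (Fin 2) (Fin 2) ℤ_[p]) (hdet : A.det ≠ 0) (htr : IsUnit A.trace) :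
    ∃ K₁ K₂ : Matrix (Fin 2) (Fin 2) ℤ_[p],
      IsUnit K₁.det ∧ IsUnit K₂.det ∧
      A = K₁ * Matrix.diagonal ![A.det, 1] * K₂ := by
  set a := A 0 0 with ha'
  set b := A 0 1 with hb'
  set c := A 1 0 with hc'
  set d := A 1 1 with hd'
  have hA : A = !![a, b; c, d] := by
    rw [ha', hb', hc', hd']; exact Matrix.etaExpand_eq A |>.symm
  have hdet2 : A.det = a * d - b * c := by rw [hA]; simp [Matrix.det_fin_two_of]
  have htr2 : A.trace = a + d := Matrix.trace_fin_two A
  rw [htr2] at htr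
  have hdg : Matrix.diagonal ![A.det, 1] = !![A.det, 0; 0, 1] := by
    ext i j; fin_cases i <;> fin_cases j <;> simp [Matrix.diagonal]
  rcases IsLocalRing.isUnit_or_isUnit_of_isUnit_add htr with ha | hd
  · obtain ⟨v, hv, hv'⟩ := isUnit_iff_exists.mp ha
    refine ⟨!![0, 1; 1, c * v], !![0, v; a, b], ?_, ?_, ?_⟩
    · simp [Matrix.det_fin_two_of]
    · have : IsUnit (-(v * a)) := by rw [hv']; exact isUnit_one.neg
      simpa [Matrix.det_fin_two_of] using this
    · rw [hdg, hdet2, hA]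
      ext i j
      fin_cases i <;> fin_cases j <;>
        simp [Matrix.mul_apply, Fin.sum_univ_two] <;>
        first
        | ring1
        | linear_combination -c * hv
        | linear_combination -d * hv
  · obtain ⟨v, hv, hv'⟩ := isUnit_iff_exists.mp hd
    refine ⟨!![1, b * v; 0, 1], !![v, 0; c, d], ?_, ?_, ?_⟩
    · simp [Matrix.det_fin_two_of]
    · have : IsUnit (v * d) := by rw [mul_comm, hv]; exact isUnit_one
      simpa [Matrix.det_fin_two_of] using this
    · rw [hdg, hdet2, hA]
      ext i j
      fin_cases i <;> fin_cases j <;>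
        simp [Matrix.mul_apply, Fin.sum_univ_two] <;>
        first
        | ring1
        | linear_combination -a * hv
        | linear_combination -b * hv
end

section
/- Let p be a prime, e ≥ 1, q = p^e, and a an integer with p ∤ a. Let n > e and let A be a 2×2 matrix with entries in ℤ_p such that trace(A) ≡ a (mod pⁿ) and det(A) ≡ q (mod pⁿ). Then there exist 2×2 matrices K₁, K₂ with entries in ℤ_p and unit determinants such that A = K₁ · diag(p^e, 1) · K₂; that is, A lies in the Cartan double coset C_{e,0} = GL₂(ℤ_p)·diag(p^e, 1)·GL₂(ℤ_p). -/
open Matrix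

lemma aux13 (p e : ℕ) [Fact p.Prime] (w : ℤ_[p]) (hw : IsUnit w)
    (A : Matrix (Fin 2) (Fin 2) ℤ_[p]) (hu : IsUnit (A 1 1))
    (hd : A.det = (p : ℤ_[p]) ^ e * w) :
    ∃ K₁ K₂ : Matrix (Fin 2) (Fin 2) ℤ_[p],
      IsUnit K₁.det ∧ IsUnit K₂.det ∧
      A = K₁ * Matrix.diagonal ![(p : ℤ_[p]) ^ e, 1] * K₂ := by
  obtain ⟨v, hv⟩ := hu
  set vi : ℤ_[p] := ↑v⁻¹ with hvi
  have hvu : A 1 1 * vi = 1 := by rw [← hv, hvi]; exact_mod_cast v.mul_inv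
  have hdet2 : A 0 0 * A 1 1 - A 0 1 * A 1 0 = (p : ℤ_[p]) ^ e * w := by
    rw [← Matrix.det_fin_two]; exact hd
  refine ⟨!![1, A 0 1 * vi; 0, 1], !![w * vi, 0; A 1 0, A 1 1], ?_, ?_, ?_⟩
  · simp [Matrix.det_fin_two_of]
  · have : (!![w * vi, 0; A 1 0, A 1 1]).det = w * (A 1 1 * vi) := by
      rw [Matrix.det_fin_two_of]; ring
    rw [this, hvu, mul_one]; exact hw
  · have hD : (Matrix.diagonal ![(p : ℤ_[p]) ^ e, 1]) = !![(p : ℤ_[p]) ^ e, 0; 0, 1] := by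
      ext i j; fin_cases i <;> fin_cases j <;> simp [Matrix.diagonal]
    rw [hD, Matrix.mul_fin_two, Matrix.mul_fin_two]
    ext i j
    fin_cases i <;> fin_cases j <;>
      simp only [Matrix.cons_val', Matrix.cons_val_zero, Matrix.cons_val_one,
        Matrix.head_cons, Matrix.head_fin_const, Matrix.of_apply, Matrix.cons_val_fin_one,
        Matrix.empty_val', Fin.isValue, Fin.mk_zero, Fin.mk_one]
    · linear_combination vi * hdet2 - A 0 0 * hvu
    · linear_combination (-(A 0 1)) * hvu
    · ring
    · ring

theorem statement13 (p : ℕ) [Fact p.Prime] (e : ℕ) (he : 1 ≤ e) (q : ℕ) (hq : q = p ^ e)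
    (a : ℤ) (ha : ¬ (p : ℤ) ∣ a) (n : ℕ) (hn : e < n)
    (A : Matrix (Fin 2) (Fin 2) ℤ_[p])
    (htr : PadicInt.toZModPow n A.trace = (a : ZMod (p ^ n)))
    (hdet : PadicInt.toZModPow n A.det = (q : ZMod (p ^ n))) :
    ∃ K₁ K₂ : Matrix (Fin 2) (Fin 2) ℤ_[p],
      IsUnit K₁.det ∧ IsUnit K₂.det ∧
      A = K₁ * Matrix.diagonal ![(p : ℤ_[p]) ^ e, 1] * K₂ := by
  have hp1 : 1 ≤ n := le_trans he hn.le
  have hpnotunit : ¬ IsUnit ((p : ℤ_[p])) := by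
    rw [PadicInt.isUnit_iff, PadicInt.norm_p]
    have h2 : (2 : ℝ) ≤ (p : ℝ) := by exact_mod_cast (Fact.out : p.Prime).two_le
    intro h
    rw [inv_eq_one] at h
    linarith
  -- trace is a unit
  have htr_unit : IsUnit A.trace := by
    by_contra hnu
    have hlt : ‖A.trace‖ < 1 :=
      lt_of_le_of_ne A.trace.2 (fun h => hnu (PadicInt.isUnit_iff.2 h))
    obtain ⟨y, hy⟩ := (PadicInt.norm_lt_one_iff_dvd _).1 hlt
    apply ha
    have h0 : (a : ZMod p) = 0 := by
      have h2 := congrArg (ZMod.castHom (dvd_pow_self p (Nat.one_le_iff_ne_zero.mp hp1))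
        (ZMod p)) htr
      rw [map_intCast] at h2
      rw [← h2, hy]
      simp only [_root_.map_mul, map_natCast, ZMod.natCast_self, zero_mul]
    rwa [ZMod.intCast_zmod_eq_zero_iff_dvd] at h0
  -- det = p^e * unit
  have hker : (p : ℤ_[p]) ^ n ∣ A.det - (p : ℤ_[p]) ^ e := by
    rw [← Ideal.mem_span_singleton, ← PadicInt.ker_toZModPow, RingHom.mem_ker, map_sub, hdet,
      hq, map_pow, map_natCast]
    push_cast
    ring
  obtain ⟨t, ht⟩ := hker
  set w : ℤ_[p] := 1 + (p : ℤ_[p]) ^ (n - e) * t with hwdef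
  have hwA : A.det = (p : ℤ_[p]) ^ e * w := by
    have hne : e + (n - e) = n := Nat.add_sub_cancel' hn.le
    have : (p : ℤ_[p]) ^ n = (p : ℤ_[p]) ^ e * (p : ℤ_[p]) ^ (n - e) := by
      rw [← pow_add, hne]
    rw [hwdef, mul_add, mul_one, ← mul_assoc, ← this, ← ht]
    ring
  have hw_unit : IsUnit w := by
    have hpd : (p : ℤ_[p]) ∣ (p : ℤ_[p]) ^ (n - e) * t := by
      exact Dvd.dvd.mul_right (dvd_pow_self _ (by omega)) t
    have hnon : -((p : ℤ_[p]) ^ (n - e) * t) ∈ nonunits ℤ_[p] := by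
      intro hun
      exact hpnotunit (isUnit_of_dvd_unit (hpd.neg_right) hun)
    have := IsLocalRing.isUnit_one_sub_self_of_mem_nonunits _ hnon
    rwa [sub_neg_eq_add] at this
  -- case split on which diagonal entry is a unit
  have htr2 : A.trace = A 0 0 + A 1 1 := Matrix.trace_fin_two A
  rw [htr2] at htr_unit
  rcases IsLocalRing.isUnit_or_isUnit_of_isUnit_add htr_unit with h00 | h11
  · -- conjugate by swap
    set S : Matrix (Fin 2) (Fin 2) ℤ_[p] := !![0, 1; 1, 0] with hSdef
    have hS : S * A * S = !![A 1 1, A 1 0; A 0 1, A 0 0] := by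
      ext i j
      fin_cases i <;> fin_cases j <;>
        simp [hSdef, Matrix.mul_apply, Fin.sum_univ_two, Matrix.vecMul, dotProduct]
    have hSS : S * S = 1 := by
      ext i j
      fin_cases i <;> fin_cases j <;>
        simp [hSdef, Matrix.mul_apply, Fin.sum_univ_succ, Matrix.one_apply]
    have hBu : IsUnit ((S * A * S) 1 1) := by rw [hS]; simpa using h00
    have hBd : (S * A * S).det = (p : ℤ_[p]) ^ e * w := by
      rw [hS, Matrix.det_fin_two_of, ← hwA, Matrix.det_fin_two]; ring
    obtain ⟨K₁, K₂, hk1, hk2, hk⟩ := aux13 p e w hw_unit (S * A * S) hBu hBd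
    refine ⟨S * K₁, K₂ * S, ?_, ?_, ?_⟩
    · rw [Matrix.det_mul]
      have : S.det = -1 := by rw [hSdef]; simp [Matrix.det_fin_two_of]
      rw [this]
      simpa using hk1.neg
    · rw [Matrix.det_mul]
      have : S.det = -1 := by rw [hSdef]; simp [Matrix.det_fin_two_of]
      rw [this]
      simpa using hk2.neg
    · have : S * (S * A * S) * S = A := by
        rw [← Matrix.mul_assoc, ← Matrix.mul_assoc, hSS, Matrix.one_mul, Matrix.mul_assoc, hSS,
          Matrix.mul_one]
      rw [← this, hk]
      noncomm_ring
  · exact aux13 p e w hw_unit A h11 hwA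
end
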